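/- Every simple graph G with matching number ν(G) ≤ ν and maximum degree Δ(G) ≤ Δ satisfies e(G) ≤ Δν + ⌊Δ/2⌋·⌊ν/⌈Δ/2⌉⌉ ≤ Δν + ν (Chvátal–Hanson theorem, weak form: e(G) ≤ Δν + ν). -/

import Mathlib

namespace CH

open Finset

variable {V : Type*}

/-- `v` is covered by the edge set `F`. -/
def cov (F : Finset (Sym2 V)) (v : V) : Prop := ∃ e ∈ F, v ∈ e

/-- `F` is a matching in `G`, as a finite set of edges. -/
def IsMat (G : SimpleGraph V) (F : Finset (Sym2 V)) : Prop :=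
  (∀ e ∈ F, e ∈ G.edgeSet) ∧ ∀ e ∈ F, ∀ f ∈ F, ∀ v : V, v ∈ e → v ∈ f → e = f

lemma IsMat.subset {G : SimpleGraph V} {F F' : Finset (Sym2 V)} (h : IsMat G F)
    (hss : F' ⊆ F) : IsMat G F' :=
  ⟨fun e he => h.1 e (hss he), fun e he f hf v hv hv' => h.2 e (hss he) f (hss hf) v hv hv'⟩

lemma isMat_empty (G : SimpleGraph V) : IsMat G ∅ := ⟨by simp, by simp⟩

lemma IsMat.ne {G : SimpleGraph V} {F : Finset (Sym2 V)} (h : IsMat G F) {a b : V}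
    (hab : s(a,b) ∈ F) : a ≠ b := by
  intro hh
  subst hh
  exact G.irrefl ((G.mem_edgeSet).mp (h.1 _ hab))

lemma cov_insert [DecidableEq V] {e : Sym2 V} {F : Finset (Sym2 V)} {y : V} :
    cov (insert e F) y ↔ y ∈ e ∨ cov F y := by
  simp only [cov, mem_insert]
  constructor
  · rintro ⟨f, (rfl | hf), hy⟩
    · exact Or.inl hy
    · exact Or.inr ⟨f, hf, hy⟩
  · rintro (hy | ⟨f, hf, hy⟩)
    · exact ⟨e, Or.inl rfl, hy⟩
    · exact ⟨f, Or.inr hf, hy⟩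

lemma cov_erase [DecidableEq V] {G : SimpleGraph V} {e : Sym2 V} {F : Finset (Sym2 V)}
    (h : IsMat G F) (he : e ∈ F) {y : V} :
    cov (F.erase e) y ↔ cov F y ∧ y ∉ e := by
  constructor
  · rintro ⟨f, hf, hy⟩
    have hfF := mem_of_mem_erase hf
    refine ⟨⟨f, hfF, hy⟩, fun hye => ?_⟩
    exact (ne_of_mem_erase hf) (h.2 f hfF e he y hy hye)
  · rintro ⟨⟨f, hf, hy⟩, hye⟩
    refine ⟨f, mem_erase.mpr ⟨?_, hf⟩, hy⟩
    rintro rfl; exact hye hy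

lemma isMat_erase [DecidableEq V] {G : SimpleGraph V} {F : Finset (Sym2 V)} (h : IsMat G F)
    (e : Sym2 V) : IsMat G (F.erase e) :=
  h.subset (erase_subset e F)

lemma isMat_insert [DecidableEq V] {G : SimpleGraph V} {F : Finset (Sym2 V)} {a b : V}
    (h : IsMat G F) (hab : s(a,b) ∈ G.edgeSet) (ha : ¬ cov F a) (hb : ¬ cov F b) :
    IsMat G (insert s(a,b) F) := by
  constructor
  · intro e he
    rcases mem_insert.mp he with rfl | he
    · exact hab
    · exact h.1 e he
  · intro e he f hf v hv hv'
    rcases mem_insert.mp he with he1 | he2 <;> rcases mem_insert.mp hf with hf1 | hf2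
    · rw [he1, hf1]
    · exfalso
      rw [he1] at hv
      rcases Sym2.mem_iff.mp hv with rfl | rfl
      · exact ha ⟨f, hf2, hv'⟩
      · exact hb ⟨f, hf2, hv'⟩
    · exfalso
      rw [hf1] at hv'
      rcases Sym2.mem_iff.mp hv' with rfl | rfl
      · exact ha ⟨e, he2, hv⟩
      · exact hb ⟨e, he2, hv⟩
    · exact h.2 e he2 f hf2 v hv hv'

/-- The core alternating-path surgery lemma: if `M` is a maximum matching, `M'` a matching,
and `u` is `M`-exposed but `M'`-covered, then there is a vertex `z` (`M`-covered,
`M'`-exposed) and matchings `N` (a rerouting of `M` covering `u` instead of `z`) and `N'`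
(a rerouting of `M'` covering `z` instead of `u`, agreeing with `M` strictly more than
`M'` does). -/
lemma core {G : SimpleGraph V} [DecidableEq V] :
    ∀ (n : ℕ) (M M' : Finset (Sym2 V)) (u : V),
    (M' \ M).card ≤ n →
    IsMat G M → IsMat G M' →
    (∀ K, IsMat G K → K.card ≤ M.card) →
    ¬ cov M u → cov M' u →
    ∃ (z : V) (N N' : Finset (Sym2 V)),
      z ≠ u ∧ cov M z ∧ ¬ cov M' z ∧
      IsMat G N ∧ N.card = M.card ∧ (∀ y, cov N y ↔ (cov M y ∧ y ≠ z) ∨ y = u) ∧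
      IsMat G N' ∧ N'.card = M'.card ∧ (∀ y, cov N' y ↔ (cov M' y ∧ y ≠ u) ∨ y = z) ∧
      (M' ∩ M) ⊆ N' ∧ (M' ∩ M).card < (N' ∩ M).card := by
  intro n
  induction n with
  | zero =>
    intro M M' u hn hM hM' _ hu hu'
    exfalso
    obtain ⟨e, he, hue⟩ := hu'
    have : e ∈ M := by
      by_contra hem
      have : e ∈ M' \ M := mem_sdiff.mpr ⟨he, hem⟩
      have := card_pos.mpr ⟨e, this⟩
      omega
    exact hu ⟨e, this, hue⟩
  | succ n ih =>
    intro M M' u hn hM hM' hmax hu hu'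
    obtain ⟨e₀, he₀, hue₀⟩ := hu'
    obtain ⟨x₁, rfl⟩ := Sym2.mem_iff_exists.mp hue₀
    have hux₁ : u ≠ x₁ := hM'.ne he₀
    have he₀edge : s(u, x₁) ∈ G.edgeSet := hM'.1 _ he₀
    have he₀M : s(u, x₁) ∉ M := fun h => hu ⟨_, h, Sym2.mem_mk_left u x₁⟩
    by_cases hx₁ : cov M x₁
    swap
    · -- x₁ is M-exposed: M ∪ {e₀} is a bigger matching, contradicting maximality
      exfalso
      have hmat := isMat_insert hM he₀edge hu hx₁
      have hcard := card_insert_of_notMem he₀M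
      have := hmax _ hmat
      omega
    obtain ⟨e₁, he₁, hx₁e₁⟩ := hx₁
    obtain ⟨x₂, rfl⟩ := Sym2.mem_iff_exists.mp hx₁e₁
    have hx₁x₂ : x₁ ≠ x₂ := hM.ne he₁
    have hx₂u : x₂ ≠ u := by
      rintro rfl
      exact hu ⟨_, he₁, Sym2.mem_mk_right x₁ x₂⟩
    have he₁e₀ : s(x₁, x₂) ≠ s(u, x₁) := fun h => he₀M (h ▸ he₁)
    have he₁M' : s(x₁, x₂) ∉ M' := by
      intro h
      exact he₁e₀ (hM'.2 _ h _ he₀ x₁ (Sym2.mem_mk_left x₁ x₂) (Sym2.mem_mk_right u x₁))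
    have hcovMx₂ : cov M x₂ := ⟨_, he₁, Sym2.mem_mk_right x₁ x₂⟩
    -- the swapped matching M̃ = M - e₁ + e₀
    set Mt : Finset (Sym2 V) := insert s(u, x₁) (M.erase s(x₁, x₂)) with hMtdef
    have hcovMex₁ : ¬ cov (M.erase s(x₁, x₂)) x₁ := by
      rw [cov_erase hM he₁]
      rintro ⟨-, hnot⟩
      exact hnot (Sym2.mem_mk_left x₁ x₂)
    have hcovMeu : ¬ cov (M.erase s(x₁, x₂)) u := by
      rw [cov_erase hM he₁]
      rintro ⟨hc, -⟩
      exact hu hc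
    have hMt : IsMat G Mt := isMat_insert (isMat_erase hM _) he₀edge hcovMeu hcovMex₁
    have he₀Me : s(u, x₁) ∉ M.erase s(x₁, x₂) := fun h => he₀M (mem_of_mem_erase h)
    have hMtcard : Mt.card = M.card := by
      rw [hMtdef, card_insert_of_notMem he₀Me, card_erase_of_mem he₁]
      have := card_pos.mpr ⟨_, he₁⟩
      omega
    have hcovMt : ∀ y, cov Mt y ↔ y = u ∨ (cov M y ∧ y ≠ x₂) := by
      intro y
      rw [hMtdef, cov_insert, cov_erase hM he₁, Sym2.mem_iff, Sym2.mem_iff]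
      constructor
      · rintro ((rfl | rfl) | ⟨hc, hnot⟩)
        · exact Or.inl rfl
        · exact Or.inr ⟨⟨_, he₁, Sym2.mem_mk_left _ _⟩, hx₁x₂⟩
        · refine Or.inr ⟨hc, fun hh => hnot (Or.inr hh)⟩
      · rintro (rfl | ⟨hc, hyx₂⟩)
        · exact Or.inl (Or.inl rfl)
        · by_cases hyx₁ : y = x₁
          · exact Or.inl (Or.inr hyx₁)
          · exact Or.inr ⟨hc, by rintro (h | h) <;> [exact hyx₁ h; exact hyx₂ h]⟩
    have hcovMtx₂ : ¬ cov Mt x₂ := by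
      rw [hcovMt]
      rintro (rfl | ⟨-, h⟩)
      · exact hx₂u rfl
      · exact h rfl
    have hmaxMt : ∀ K, IsMat G K → K.card ≤ Mt.card := by
      intro K hK; rw [hMtcard]; exact hmax K hK
    by_cases hx₂ : cov M' x₂
    · -- recursive case
      have hmeas : (M' \ Mt).card ≤ n := by
        have hsubs : M' \ Mt ⊆ (M' \ M).erase s(u, x₁) := by
          intro e he'
          rw [mem_sdiff] at he'
          rw [mem_erase, mem_sdiff]
          have he₁ne : e ≠ s(x₁, x₂) := by rintro rfl; exact he₁M' he'.1
          have he₀ne : e ≠ s(u, x₁) := by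
            rintro rfl
            exact he'.2 (mem_insert_self _ _)
          refine ⟨he₀ne, he'.1, fun heM => ?_⟩
          exact he'.2 (mem_insert_of_mem (mem_erase.mpr ⟨he₁ne, heM⟩))
        have h1 : (M' \ Mt).card ≤ ((M' \ M).erase s(u, x₁)).card := card_le_card hsubs
        have h2 : s(u, x₁) ∈ M' \ M := mem_sdiff.mpr ⟨he₀, he₀M⟩
        rw [card_erase_of_mem h2] at h1
        have := card_pos.mpr ⟨_, h2⟩
        omega
      obtain ⟨z, Nt, Nt', hz_ne, hzMt, hzM', hNt, hNtcard, hNtcov, hNt', hNt'card, hNt'cov,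
        hsub, hcards⟩ := ih Mt M' x₂ hmeas hMt hM' hmaxMt hcovMtx₂ hx₂
      -- translate outputs
      have hzu : z ≠ u := by rintro rfl; exact hzM' ⟨_, he₀, Sym2.mem_mk_left z x₁⟩
      have hzx₁ : z ≠ x₁ := by rintro rfl; exact hzM' ⟨_, he₀, Sym2.mem_mk_right u z⟩
      have hzM : cov M z := by
        rcases (hcovMt z).mp hzMt with rfl | ⟨hc, -⟩
        · exact absurd rfl hzu
        · exact hc
      refine ⟨z, Nt, insert s(x₁, x₂) (Nt'.erase s(u, x₁)), hzu, hzM, hzM', hNt, by omega, ?_, ?_, ?_, ?_, ?_, ?_⟩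
      · -- cov description of N = Nt
        intro y
        rw [hNtcov y, hcovMt y]
        constructor
        · rintro (⟨(rfl | ⟨hc, hyx₂⟩), hyz⟩ | rfl)
          · exact Or.inr rfl
          · exact Or.inl ⟨hc, hyz⟩
          · exact Or.inl ⟨hcovMx₂, Ne.symm hz_ne⟩
        · rintro (⟨hc, hyz⟩ | rfl)
          · by_cases hyx₂ : y = x₂
            · exact Or.inr hyx₂
            · exact Or.inl ⟨Or.inr ⟨hc, hyx₂⟩, hyz⟩
          · exact Or.inl ⟨Or.inl rfl, Ne.symm hzu⟩
      all_goals {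
        have he₀Nt' : s(u, x₁) ∈ Nt' := hsub (mem_inter.mpr ⟨he₀, mem_insert_self _ _⟩)
        have hx₁free : ¬ cov (Nt'.erase s(u, x₁)) x₁ := by
          rw [cov_erase hNt' he₀Nt']
          rintro ⟨-, hnot⟩
          exact hnot (Sym2.mem_mk_right u x₁)
        have hx₂Nt' : ¬ cov Nt' x₂ := by
          rw [hNt'cov]
          rintro (⟨-, h⟩ | h)
          · exact h rfl
          · exact hz_ne h.symm
        have hx₂free : ¬ cov (Nt'.erase s(u, x₁)) x₂ := by
          rw [cov_erase hNt' he₀Nt']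
          rintro ⟨hc, -⟩
          exact hx₂Nt' hc
        have he₁edge : s(x₁, x₂) ∈ G.edgeSet := hM.1 _ he₁
        have hN'mat : IsMat G (insert s(x₁, x₂) (Nt'.erase s(u, x₁))) :=
          isMat_insert (isMat_erase hNt' _) he₁edge hx₁free hx₂free
        have he₁Nt'e : s(x₁, x₂) ∉ Nt'.erase s(u, x₁) := by
          intro h
          exact hx₂Nt' ⟨_, mem_of_mem_erase h, Sym2.mem_mk_right x₁ x₂⟩
        have hN'card : (insert s(x₁, x₂) (Nt'.erase s(u, x₁))).card = M'.card := by
          rw [card_insert_of_notMem he₁Nt'e, card_erase_of_mem he₀Nt']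
          have := card_pos.mpr ⟨_, he₀Nt'⟩
          omega
        have hcovM'x₁ : cov M' x₁ := ⟨_, he₀, Sym2.mem_mk_right u x₁⟩
        have hN'cov : ∀ y, cov (insert s(x₁, x₂) (Nt'.erase s(u, x₁))) y ↔
            (cov M' y ∧ y ≠ u) ∨ y = z := by
          intro y
          rw [cov_insert, cov_erase hNt' he₀Nt', hNt'cov y, Sym2.mem_iff, Sym2.mem_iff]
          constructor
          · rintro ((rfl | rfl) | ⟨(⟨hc, -⟩ | rfl), hnot⟩)
            · exact Or.inl ⟨hcovM'x₁, hux₁.symm⟩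
            · exact Or.inl ⟨hx₂, hx₂u⟩
            · exact Or.inl ⟨hc, fun hh => hnot (Or.inl hh)⟩
            · exact Or.inr rfl
          · rintro (⟨hc, hyu⟩ | rfl)
            · by_cases hyx₁ : y = x₁
              · exact Or.inl (Or.inl hyx₁)
              · by_cases hyx₂ : y = x₂
                · exact Or.inl (Or.inr hyx₂)
                · exact Or.inr ⟨Or.inl ⟨hc, hyx₂⟩, by rintro (h | h) <;> [exact hyu h; exact hyx₁ h]⟩
            · refine Or.inr ⟨Or.inr rfl, by rintro (h | h) <;> [exact hzu h; exact hzx₁ h]⟩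
        have hsub' : M' ∩ M ⊆ insert s(x₁, x₂) (Nt'.erase s(u, x₁)) := by
          intro e he'
          have heM' := (mem_inter.mp he').1
          have heM := (mem_inter.mp he').2
          have he₁ne : e ≠ s(x₁, x₂) := by rintro rfl; exact he₁M' heM'
          have he₀ne : e ≠ s(u, x₁) := by rintro rfl; exact he₀M heM
          have heMt : e ∈ Mt := mem_insert_of_mem (mem_erase.mpr ⟨he₁ne, heM⟩)
          exact mem_insert_of_mem (mem_erase.mpr ⟨he₀ne, hsub (mem_inter.mpr ⟨heM', heMt⟩)⟩)
        have hstrict : (M' ∩ M).card < ((insert s(x₁, x₂) (Nt'.erase s(u, x₁))) ∩ M).card := by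
          apply card_lt_card
          rw [ssubset_iff_of_subset (fun e he' => mem_inter.mpr
            ⟨hsub' he', (mem_inter.mp he').2⟩)]
          refine ⟨s(x₁, x₂), mem_inter.mpr ⟨mem_insert_self _ _, he₁⟩, fun h => ?_⟩
          exact he₁M' (mem_inter.mp h).1
        first
          | exact hN'mat
          | exact hN'card
          | exact hN'cov
          | exact hsub'
          | exact hstrict
      }
    · -- base case: x₂ is M'-exposed; z = x₂
      have hx₁covM' : cov M' x₁ := ⟨_, he₀, Sym2.mem_mk_right u x₁⟩
      have he₀M'e : ¬ cov (M'.erase s(u, x₁)) x₁ := by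
        rw [cov_erase hM' he₀]
        rintro ⟨-, hnot⟩
        exact hnot (Sym2.mem_mk_right u x₁)
      have hx₂M'e : ¬ cov (M'.erase s(u, x₁)) x₂ := by
        rw [cov_erase hM' he₀]
        rintro ⟨hc, -⟩
        exact hx₂ hc
      have he₁edge : s(x₁, x₂) ∈ G.edgeSet := hM.1 _ he₁
      have hN'mat : IsMat G (insert s(x₁, x₂) (M'.erase s(u, x₁))) :=
        isMat_insert (isMat_erase hM' _) he₁edge he₀M'e hx₂M'e
      have he₁M'e : s(x₁, x₂) ∉ M'.erase s(u, x₁) := fun h => he₁M' (mem_of_mem_erase h)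
      refine ⟨x₂, Mt, insert s(x₁, x₂) (M'.erase s(u, x₁)), hx₂u, hcovMx₂, hx₂, hMt, hMtcard,
        ?_, hN'mat, ?_, ?_, ?_, ?_⟩
      · intro y
        rw [hcovMt y]
        tauto
      · rw [card_insert_of_notMem he₁M'e, card_erase_of_mem he₀]
        have := card_pos.mpr ⟨_, he₀⟩
        omega
      · intro y
        rw [cov_insert, cov_erase hM' he₀, Sym2.mem_iff, Sym2.mem_iff]
        constructor
        · rintro ((rfl | rfl) | ⟨hc, hnot⟩)
          · exact Or.inl ⟨hx₁covM', hux₁.symm⟩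
          · exact Or.inr rfl
          · exact Or.inl ⟨hc, fun hh => hnot (Or.inl hh)⟩
        · rintro (⟨hc, hyu⟩ | rfl)
          · by_cases hyx₁ : y = x₁
            · exact Or.inl (Or.inl hyx₁)
            · refine Or.inr ⟨hc, by rintro (h | h) <;> [exact hyu h; exact hyx₁ h]⟩
          · exact Or.inl (Or.inr rfl)
      · intro e he'
        have heM' := (mem_inter.mp he').1
        have heM := (mem_inter.mp he').2
        have he₀ne : e ≠ s(u, x₁) := by rintro rfl; exact he₀M heM
        exact mem_insert_of_mem (mem_erase.mpr ⟨he₀ne, heM'⟩)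
      · apply card_lt_card
        rw [ssubset_iff_of_subset]
        · refine ⟨s(x₁, x₂), mem_inter.mpr ⟨mem_insert_self _ _, he₁⟩, fun h => ?_⟩
          exact he₁M' (mem_inter.mp h).1
        · intro e he'
          have heM' := (mem_inter.mp he').1
          have heM := (mem_inter.mp he').2
          have he₀ne : e ≠ s(u, x₁) := by rintro rfl; exact he₀M heM
          exact mem_inter.mpr ⟨mem_insert_of_mem (mem_erase.mpr ⟨he₀ne, heM'⟩), heM⟩

section Part2

variable [Finite V]

/-- The matching number of `G`. -/
noncomputable def nu (G : SimpleGraph V) : ℕ := sSup {k | ∃ F, IsMat G F ∧ F.card = k}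

lemma bddAbove_nu (G : SimpleGraph V) : BddAbove {k | ∃ F, IsMat G F ∧ F.card = k} := by
  have := Fintype.ofFinite V
  classical
  exact ⟨Fintype.card (Sym2 V), by rintro k ⟨F, -, rfl⟩; exact F.card_le_univ⟩

lemma le_nu {G : SimpleGraph V} {F : Finset (Sym2 V)} (h : IsMat G F) : F.card ≤ nu G :=
  le_csSup (bddAbove_nu G) ⟨F, h, rfl⟩

lemma exists_nu (G : SimpleGraph V) : ∃ F, IsMat G F ∧ F.card = nu G := by
  have hne : {k | ∃ F, IsMat G F ∧ F.card = k}.Nonempty := ⟨0, ∅, isMat_empty G, rfl⟩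
  exact Nat.sSup_mem hne (bddAbove_nu G)

/-- Gallai's lemma, nonexistence form: in a connected graph in which every vertex is
missed by some maximum matching, no maximum matching misses two distinct vertices. -/
lemma gallai (G : SimpleGraph V) (hpc : G.Preconnected)
    (hin : ∀ x : V, ∃ F, IsMat G F ∧ F.card = nu G ∧ ¬ cov F x) :
    ∀ M u v, IsMat G M → M.card = nu G → ¬ cov M u → ¬ cov M v → u ≠ v → False := by
  classical
  have hfV := Fintype.ofFinite V
  intro M₀ u₀ v₀ hM₀ hM₀c hu₀ hv₀ huv₀
  set D : Set ℕ := {d | ∃ M u v, IsMat G M ∧ M.card = nu G ∧ ¬ cov M u ∧ ¬ cov M v ∧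
    u ≠ v ∧ G.dist u v = d} with hDdef
  have hDne : D.Nonempty := ⟨_, M₀, u₀, v₀, hM₀, hM₀c, hu₀, hv₀, huv₀, rfl⟩
  have hnotadj : ∀ (M : Finset (Sym2 V)) u v, IsMat G M → M.card = nu G →
      ¬ cov M u → ¬ cov M v → ¬ G.Adj u v := by
    intro M u v hM hMc hu hv hadj
    have h1 := isMat_insert hM ((G.mem_edgeSet).mpr hadj) hu hv
    have h2 : s(u,v) ∉ M := fun h => hu ⟨_, h, Sym2.mem_mk_left _ _⟩
    have h3 := le_nu h1
    rw [card_insert_of_notMem h2] at h3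
    omega
  obtain ⟨M, u, v, hM, hMc, hu, hv, huv, hdist⟩ := Nat.sInf_mem hDne
  obtain ⟨p, hp⟩ := (hpc u v).exists_walk_length_eq_dist
  cases p with
  | nil => exact huv rfl
  | @cons _ w _ hadj q =>
    rw [SimpleGraph.Walk.length_cons] at hp
    have hwv : w ≠ v := by
      rintro rfl
      exact hnotadj M u w hM hMc hu hv hadj
    have hq1 : 1 ≤ q.length := by
      rcases Nat.eq_zero_or_pos q.length with h0 | h1
      · exact absurd (q.eq_of_length_eq_zero h0) hwv
      · exact h1
    have hdistwv : G.dist w v ≤ q.length := SimpleGraph.dist_le q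
    have hduw : G.dist u w ≤ 1 := by
      simpa using SimpleGraph.dist_le (SimpleGraph.Walk.cons hadj SimpleGraph.Walk.nil)
    have huw : u ≠ w := G.ne_of_adj hadj
    have hcovw : cov M w := by
      by_contra hcw
      have hmem : G.dist w v ∈ D := ⟨M, w, v, hM, hMc, hcw, hv, hwv, rfl⟩
      have := Nat.sInf_le hmem
      omega
    set A : Set (Finset (Sym2 V)) := {F | IsMat G F ∧ F.card = nu G ∧ ¬ cov F w} with hAdef
    have hAne : A.Nonempty := hin w
    have hAfin : A.Finite := Set.toFinite A
    obtain ⟨M', hM'A, hM'max⟩ : ∃ F ∈ A, ∀ F' ∈ A, (F' ∩ M).card ≤ (F ∩ M).card := by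
      obtain ⟨a, ha, hmax⟩ := Set.Finite.exists_maximalFor (fun F => (F ∩ M).card) A hAfin hAne
      exact ⟨a, ha, fun b hb => le_of_not_gt fun hlt => absurd (hmax hb hlt.le) (not_le.mpr hlt)⟩
    obtain ⟨hM', hM'c, hM'w⟩ := hM'A
    have hcovu' : cov M' u := by
      by_contra hcu
      have hmem : G.dist u w ∈ D := ⟨M', u, w, hM', hM'c, hcu, hM'w, huw, rfl⟩
      have := Nat.sInf_le hmem
      omega
    have hmaxM : ∀ K, IsMat G K → K.card ≤ M.card := fun K hK => by
      rw [hMc]; exact le_nu hK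
    obtain ⟨z, N, N', hzu, hzM, hzM', hN, hNc, hNcov, hN', hN'c, hN'cov, hsub, hlt⟩ :=
      core (G := G) (M' \ M).card M M' u le_rfl hM hM' hmaxM hu hcovu'
    by_cases hzw : z = w
    · subst hzw
      have hNw : ¬ cov N z := by
        rw [hNcov]
        rintro (⟨-, hne⟩ | h)
        · exact hne rfl
        · exact huw (h.symm ▸ rfl)
      have hNv : ¬ cov N v := by
        rw [hNcov]
        rintro (⟨hc, -⟩ | h)
        · exact hv hc
        · exact huv (h.symm)
      have hmem : G.dist z v ∈ D := ⟨N, z, v, hN, by omega, hNw, hNv, hwv, rfl⟩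
      have := Nat.sInf_le hmem
      omega
    · have hN'w : ¬ cov N' w := by
        rw [hN'cov]
        rintro (⟨hc, -⟩ | h)
        · exact hM'w hc
        · exact hzw h.symm
      have hmem : N' ∈ A := ⟨hN', by omega, hN'w⟩
      have := hM'max N' hmem
      omega

/-- Counting: a matching `M` covers exactly `2 * M.card` vertices. -/
lemma cov_card (G : SimpleGraph V) {M : Finset (Sym2 V)} (hM : IsMat G M) :
    {v | cov M v}.ncard = 2 * M.card := by
  classical
  letI := Fintype.ofFinite V
  have heq : {v | cov M v} =
      ↑(M.biUnion (fun e => Finset.univ.filter (fun x => x ∈ e))) := by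
    ext y
    simp [cov]
  rw [heq, Set.ncard_coe_finset, card_biUnion]
  · have hc2 : ∀ e ∈ M, (Finset.univ.filter (fun x : V => x ∈ e)).card = 2 := by
      intro e
      induction e using Sym2.ind with
      | _ a b =>
        intro he
        have hab : a ≠ b := hM.ne he
        have hfe : Finset.univ.filter (fun x : V => x ∈ s(a,b)) = {a, b} := by
          ext x
          simp [Sym2.mem_iff]
        rw [hfe, card_insert_of_notMem (by simp [hab]), card_singleton]
    rw [Finset.sum_congr rfl hc2, Finset.sum_const, smul_eq_mul, mul_comm]
  · intro e he f hf hef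
    rw [Function.onFun, Finset.disjoint_left]
    intro x hx hx'
    exact hef (hM.2 e he f hf x (mem_filter.mp hx).2 (mem_filter.mp hx').2)

/-- In a connected graph in which every vertex is missed by some maximum matching,
there are at most `2ν + 1` vertices. -/
lemma gallai_card (G : SimpleGraph V) (hpc : G.Preconnected)
    (hin : ∀ x : V, ∃ F, IsMat G F ∧ F.card = nu G ∧ ¬ cov F x) :
    Nat.card V ≤ 2 * nu G + 1 := by
  classical
  obtain ⟨M, hM, hMc⟩ := exists_nu G
  have hcov := cov_card G hM
  have htot := Set.ncard_add_ncard_compl {v | cov M v}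
  have hexp : ({v | cov M v}ᶜ).ncard ≤ 1 := by
    by_contra hgt
    obtain ⟨a, b, ha, hb, hab⟩ := (Set.one_lt_ncard_iff (Set.toFinite _)).mp (not_le.mp hgt)
    exact gallai G hpc hin M a b hM hMc ha hb hab
  omega

end Part2

section Part3

variable [Finite V]

lemma psi_inj (S : Set V) : Function.Injective (Sym2.map (Subtype.val : ↥S → V)) :=
  Sym2.map.injective Subtype.val_injective

lemma induce_edge_iff {G : SimpleGraph V} {S : Set V} (e' : Sym2 ↥S) :
    e' ∈ (G.induce S).edgeSet ↔ Sym2.map Subtype.val e' ∈ G.edgeSet := by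
  induction e' using Sym2.ind with
  | _ a b => simp [SimpleGraph.mem_edgeSet, SimpleGraph.comap_adj]

/-- Edge count of an induced subgraph. -/
lemma induce_edge_ncard (G : SimpleGraph V) (S : Set V) :
    (G.induce S).edgeSet.ncard = {e ∈ G.edgeSet | ∀ x ∈ e, x ∈ S}.ncard := by
  rw [← Set.ncard_image_of_injective _ (psi_inj S)]
  congr 1
  ext e
  constructor
  · rintro ⟨e', he', rfl⟩
    induction e' using Sym2.ind with
    | _ a b =>
      rw [Sym2.map_pair_eq]
      refine ⟨(induce_edge_iff _).mp he', ?_⟩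
      · intro x hx
        rcases Sym2.mem_iff.mp hx with rfl | rfl
        · exact a.2
        · exact b.2
  · intro he
    induction e using Sym2.ind with
    | _ x y =>
      obtain ⟨hE, hS⟩ := he
      have hx : x ∈ S := hS x (Sym2.mem_mk_left x y)
      have hy : y ∈ S := hS y (Sym2.mem_mk_right x y)
      refine ⟨s(⟨x, hx⟩, ⟨y, hy⟩), ?_, by rw [Sym2.map_pair_eq]⟩
      rw [induce_edge_iff, Sym2.map_pair_eq]
      exact hE

/-- Degrees don't increase when passing to an induced subgraph. -/
lemma induce_deg_le (G : SimpleGraph V) (S : Set V) (x : ↥S) :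
    ((G.induce S).neighborSet x).ncard ≤ (G.neighborSet ↑x).ncard := by
  rw [← Set.ncard_image_of_injective _ (Subtype.val_injective)]
  apply Set.ncard_le_ncard _ (Set.toFinite _)
  rintro y ⟨⟨y', hy'⟩, hadj, rfl⟩
  exact hadj

/-- Pushing a matching of an induced subgraph up to the whole graph. -/
lemma isMat_pushup {G : SimpleGraph V} {S : Set V} {F' : Finset (Sym2 ↥S)}
    (h : IsMat (G.induce S) F') :
    ∃ F : Finset (Sym2 V), IsMat G F ∧ F.card = F'.card ∧ ∀ y, cov F y → y ∈ S := by
  classical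
  refine ⟨F'.image (Sym2.map Subtype.val), ⟨?_, ?_⟩, ?_, ?_⟩
  · intro e he
    obtain ⟨e', he', rfl⟩ := Finset.mem_image.mp he
    exact (induce_edge_iff e').mp (h.1 e' he')
  · intro e he f hf v hv hv'
    obtain ⟨e', he', rfl⟩ := Finset.mem_image.mp he
    obtain ⟨f', hf', rfl⟩ := Finset.mem_image.mp hf
    obtain ⟨a, ha, rfl⟩ := Sym2.mem_map.mp hv
    obtain ⟨a', ha', hval⟩ := Sym2.mem_map.mp hv'
    have hval' : a = a' := (Subtype.val_injective hval).symm
    subst hval'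
    rw [h.2 e' he' f' hf' a ha ha']
  · exact Finset.card_image_of_injective F' (psi_inj S)
  · rintro y ⟨e, he, hy⟩
    obtain ⟨e', he', rfl⟩ := Finset.mem_image.mp he
    obtain ⟨a, ha, rfl⟩ := Sym2.mem_map.mp hy
    exact a.2

lemma nu_induce_le (G : SimpleGraph V) (S : Set V) : nu (G.induce S) ≤ nu G := by
  obtain ⟨F', hF', hc⟩ := exists_nu (G.induce S)
  obtain ⟨F, hF, hcard, -⟩ := isMat_pushup hF'
  rw [← hc, ← hcard]
  exact le_nu hF

/-- Superadditivity of the matching number over a vertex-set split. -/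
lemma nu_parts_le (G : SimpleGraph V) (S : Set V) :
    nu (G.induce S) + nu (G.induce Sᶜ) ≤ nu G := by
  classical
  obtain ⟨F₁', hF₁', hc₁⟩ := exists_nu (G.induce S)
  obtain ⟨F₂', hF₂', hc₂⟩ := exists_nu (G.induce Sᶜ)
  obtain ⟨F₁, hF₁, hcard₁, hcov₁⟩ := isMat_pushup hF₁'
  obtain ⟨F₂, hF₂, hcard₂, hcov₂⟩ := isMat_pushup hF₂'
  have hdisj : Disjoint F₁ F₂ := by
    rw [Finset.disjoint_left]
    intro e he₁ he₂
    induction e using Sym2.ind with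
    | _ a b =>
      exact (hcov₂ a ⟨_, he₂, Sym2.mem_mk_left a b⟩) (hcov₁ a ⟨_, he₁, Sym2.mem_mk_left a b⟩)
  have hmat : IsMat G (F₁ ∪ F₂) := by
    constructor
    · intro e he
      rcases Finset.mem_union.mp he with h | h
      · exact hF₁.1 e h
      · exact hF₂.1 e h
    · intro e he f hf v hv hv'
      rcases Finset.mem_union.mp he with h | h <;> rcases Finset.mem_union.mp hf with h' | h'
      · exact hF₁.2 e h f h' v hv hv'
      · exact absurd (hcov₁ v ⟨e, h, hv⟩) (hcov₂ v ⟨f, h', hv'⟩)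
      · exact absurd (hcov₁ v ⟨f, h', hv'⟩) (hcov₂ v ⟨e, h, hv⟩)
      · exact hF₂.2 e h f h' v hv hv'
  have := le_nu hmat
  rw [Finset.card_union_of_disjoint hdisj, hcard₁, hcard₂, hc₁, hc₂] at this
  exact this

/-- Edge partition when deleting a vertex. -/
lemma edge_count_delete (G : SimpleGraph V) (v : V) :
    G.edgeSet.ncard =
      (G.neighborSet v).ncard + {e ∈ G.edgeSet | ∀ x ∈ e, x ∈ ({v}ᶜ : Set V)}.ncard := by
  classical
  have hU : G.edgeSet = {e ∈ G.edgeSet | v ∈ e} ∪ {e ∈ G.edgeSet | ∀ x ∈ e, x ∈ ({v}ᶜ : Set V)} := by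
    ext e
    constructor
    · intro he
      by_cases hv : v ∈ e
      · exact Or.inl ⟨he, hv⟩
      · refine Or.inr ⟨he, fun x hx => ?_⟩
        rw [Set.mem_compl_singleton_iff]
        rintro rfl
        exact hv hx
    · rintro (⟨he, -⟩ | ⟨he, -⟩) <;> exact he
  have hdisj : Disjoint {e ∈ G.edgeSet | v ∈ e}
      {e ∈ G.edgeSet | ∀ x ∈ e, x ∈ ({v}ᶜ : Set V)} := by
    rw [Set.disjoint_left]
    rintro e ⟨-, hv⟩ ⟨-, hS⟩
    exact (Set.mem_compl_singleton_iff.mp (hS v hv)) rfl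
  have key : G.edgeSet.ncard = {e ∈ G.edgeSet | v ∈ e}.ncard +
      {e ∈ G.edgeSet | ∀ x ∈ e, x ∈ ({v}ᶜ : Set V)}.ncard := by
    have h1 : G.edgeSet.ncard = ({e ∈ G.edgeSet | v ∈ e} ∪
        {e ∈ G.edgeSet | ∀ x ∈ e, x ∈ ({v}ᶜ : Set V)}).ncard := congrArg Set.ncard hU
    rw [h1, Set.ncard_union_eq hdisj (Set.toFinite _) (Set.toFinite _)]
  rw [key]
  congr 1
  have himg : {e ∈ G.edgeSet | v ∈ e} = (fun w => s(v, w)) '' (G.neighborSet v) := by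
    ext e
    constructor
    · rintro ⟨he, hv⟩
      obtain ⟨w, rfl⟩ := Sym2.mem_iff_exists.mp hv
      exact ⟨w, (G.mem_edgeSet).mp he, rfl⟩
    · rintro ⟨w, hw, rfl⟩
      exact ⟨(G.mem_edgeSet).mpr hw, Sym2.mem_mk_left v w⟩
  rw [himg, Set.ncard_image_of_injOn]
  intro w hw w' hw' heq
  rcases Sym2.eq_iff.mp heq with ⟨-, h⟩ | ⟨h1, h2⟩
  · exact h
  · exact h2.trans h1

/-- Edge partition for a split with no cross edges. -/
lemma edge_count_split (G : SimpleGraph V) (S : Set V)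
    (hnc : ∀ a b, G.Adj a b → a ∈ S → b ∈ S) :
    G.edgeSet.ncard =
      {e ∈ G.edgeSet | ∀ x ∈ e, x ∈ S}.ncard + {e ∈ G.edgeSet | ∀ x ∈ e, x ∈ Sᶜ}.ncard := by
  classical
  have hU : G.edgeSet = {e ∈ G.edgeSet | ∀ x ∈ e, x ∈ S} ∪ {e ∈ G.edgeSet | ∀ x ∈ e, x ∈ Sᶜ} := by
    ext e
    induction e using Sym2.ind with
    | _ a b =>
      constructor
      · intro he
        have hadj : G.Adj a b := (G.mem_edgeSet).mp he
        by_cases ha : a ∈ S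
        · refine Or.inl ⟨he, fun x hx => ?_⟩
          rcases Sym2.mem_iff.mp hx with rfl | rfl
          · exact ha
          · exact hnc _ _ hadj ha
        · refine Or.inr ⟨he, fun x hx => ?_⟩
          rcases Sym2.mem_iff.mp hx with rfl | rfl
          · exact ha
          · exact fun hb => ha (hnc _ _ hadj.symm hb)
      · rintro (⟨he, -⟩ | ⟨he, -⟩) <;> exact he
  have hdisj : Disjoint {e ∈ G.edgeSet | ∀ x ∈ e, x ∈ S}
      {e ∈ G.edgeSet | ∀ x ∈ e, x ∈ Sᶜ} := by
    rw [Set.disjoint_left]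
    rintro e ⟨-, h1⟩ ⟨-, h2⟩
    induction e using Sym2.ind with
    | _ a b => exact (h2 a (Sym2.mem_mk_left a b)) (h1 a (Sym2.mem_mk_left a b))
  have h1 : G.edgeSet.ncard = ({e ∈ G.edgeSet | ∀ x ∈ e, x ∈ S} ∪
      {e ∈ G.edgeSet | ∀ x ∈ e, x ∈ Sᶜ}).ncard := congrArg Set.ncard hU
  rw [h1, Set.ncard_union_eq hdisj (Set.toFinite _) (Set.toFinite _)]

end Part3

section Part4

universe u

/-- Main induction: the weak Chvátal–Hanson bound `e(G) ≤ Δ·ν(G) + ν(G)`. -/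
lemma main_bound : ∀ (n : ℕ) (W : Type u) [Finite W], Nat.card W ≤ n →
    ∀ (G : SimpleGraph W) (Δ : ℕ), (∀ v, (G.neighborSet v).ncard ≤ Δ) →
    G.edgeSet.ncard ≤ Δ * nu G + nu G := by
  intro n
  induction n with
  | zero =>
    intro W _ hcard G Δ _
    have hVempty : IsEmpty W := by
      rcases Nat.card_eq_zero.mp (Nat.le_zero.mp hcard) with h | h
      · exact h
      · exact absurd h (not_infinite_iff_finite.mpr ‹Finite W›)
    have hempty : G.edgeSet = ∅ := by
      ext e
      induction e using Sym2.ind with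
      | _ a b => exact (hVempty.false a).elim
    rw [hempty, Set.ncard_empty]
    exact Nat.zero_le _
  | succ n ih =>
    intro W _ hcard G Δ hdeg
    classical
    by_cases hess : ∃ v : W, nu (G.induce ({v}ᶜ : Set W)) < nu G
    · -- Case 1: an essential vertex exists; delete it
      obtain ⟨v, hv⟩ := hess
      have hone : ({v} : Set W).ncard = 1 := Set.ncard_singleton v
      have hcompl := Set.ncard_add_ncard_compl ({v} : Set W)
      have hcard' : Nat.card ↥({v}ᶜ : Set W) ≤ n := by
        rw [Nat.card_coe_set_eq]
        omega
      have hIH := ih ↥({v}ᶜ : Set W) hcard' (G.induce _) Δ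
        (fun x => le_trans (induce_deg_le G _ x) (hdeg ↑x))
      have hec := edge_count_delete G v
      have hic := induce_edge_ncard G ({v}ᶜ : Set W)
      rw [hic] at hIH
      have hdegv := hdeg v
      have hmul := Nat.mul_le_mul_left Δ (show nu (G.induce ({v}ᶜ : Set W)) + 1 ≤ nu G from hv)
      rw [Nat.mul_add, Nat.mul_one] at hmul
      have hnule : nu (G.induce ({v}ᶜ : Set W)) + 1 ≤ nu G := hv
      linarith
    · push_neg at hess
      by_cases hpc : G.Preconnected
      · -- Case 2: connected, every vertex inessential: Gallai + degree counting
        have hin : ∀ x : W, ∃ F, IsMat G F ∧ F.card = nu G ∧ ¬ cov F x := by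
          intro x
          obtain ⟨F', hF', hc'⟩ := exists_nu (G.induce ({x}ᶜ : Set W))
          obtain ⟨F, hF, hcard', hcov⟩ := isMat_pushup hF'
          refine ⟨F, hF, ?_, ?_⟩
          · have h1 := nu_induce_le G ({x}ᶜ : Set W)
            have h2 := hess x
            omega
          · intro hcx
            exact Set.mem_compl_singleton_iff.mp (hcov x hcx) rfl
        have hcard2 := gallai_card G hpc hin
        letI := Fintype.ofFinite W
        have hds := G.sum_degrees_eq_twice_card_edges
        have hdeq : ∀ v : W, G.degree v = (G.neighborSet v).ncard := fun v => by
          rw [Set.ncard_eq_toFinset_card']; rfl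
        have heeq : G.edgeFinset.card = G.edgeSet.ncard := by
          rw [Set.ncard_eq_toFinset_card', SimpleGraph.edgeFinset]
        set k := nu G with hk
        set n' := Nat.card W with hn'
        set Δ' := min Δ (n' - 1) with hΔ'
        have hdle : ∀ v : W, (G.neighborSet v).ncard ≤ Δ' := by
          intro v
          refine le_min (hdeg v) ?_
          have hsub : G.neighborSet v ⊆ ({v}ᶜ : Set W) := fun w hw =>
            Set.mem_compl_singleton_iff.mpr (G.ne_of_adj hw).symm
          have h2 := Set.ncard_le_ncard hsub (Set.toFinite _)
          have h3 := Set.ncard_add_ncard_compl ({v} : Set W)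
          have h4 := Set.ncard_singleton v
          omega
        have hsum : ∑ v : W, G.degree v ≤ n' * Δ' := by
          calc ∑ v : W, G.degree v ≤ ∑ _v : W, Δ' :=
                Finset.sum_le_sum (fun v _ => by rw [hdeq]; exact hdle v)
            _ = n' * Δ' := by
                rw [Finset.sum_const, smul_eq_mul, Finset.card_univ, hn',
                  Nat.card_eq_fintype_card]
        have h2e : 2 * G.edgeSet.ncard ≤ n' * Δ' := by
          rw [← heeq, ← hds]
          exact hsum
        have hb1 : n' * Δ' ≤ (2 * k + 1) * Δ' := Nat.mul_le_mul_right _ hcard2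
        have hb2 : (2 * k + 1) * Δ' = 2 * (k * Δ') + Δ' := by ring
        have hb3 : k * Δ' ≤ k * Δ := Nat.mul_le_mul_left _ (min_le_left _ _)
        have hb4 : Δ' ≤ 2 * k := le_trans (min_le_right _ _) (by omega)
        have hb5 : Δ * k = k * Δ := Nat.mul_comm _ _
        linarith
      · -- Case 3: disconnected; split along a connected component
        rw [SimpleGraph.Preconnected] at hpc
        push_neg at hpc
        obtain ⟨u₀, w₀, hnr⟩ := hpc
        set S : Set W := {x | G.Reachable u₀ x} with hSdef
        have hu₀S : u₀ ∈ S := SimpleGraph.Reachable.refl u₀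
        have hw₀S : w₀ ∈ Sᶜ := hnr
        have hnc : ∀ a b, G.Adj a b → a ∈ S → b ∈ S := fun a b hab ha =>
          ha.trans hab.reachable
        have hcards := Set.ncard_add_ncard_compl S
        have hSpos : 0 < S.ncard := (Set.ncard_pos (Set.toFinite _)).mpr ⟨u₀, hu₀S⟩
        have hScpos : 0 < (Sᶜ).ncard := (Set.ncard_pos (Set.toFinite _)).mpr ⟨w₀, hw₀S⟩
        have hc1 : Nat.card ↥S ≤ n := by rw [Nat.card_coe_set_eq]; omega
        have hc2 : Nat.card ↥(Sᶜ) ≤ n := by rw [Nat.card_coe_set_eq]; omega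
        have hIH1 := ih ↥S hc1 (G.induce S) Δ
          (fun x => le_trans (induce_deg_le G S x) (hdeg ↑x))
        have hIH2 := ih ↥(Sᶜ) hc2 (G.induce Sᶜ) Δ
          (fun x => le_trans (induce_deg_le G _ x) (hdeg ↑x))
        have hsplit := edge_count_split G S hnc
        rw [← induce_edge_ncard, ← induce_edge_ncard] at hsplit
        have hnusum := nu_parts_le G S
        have hmul : Δ * (nu (G.induce S) + nu (G.induce Sᶜ)) ≤ Δ * nu G :=
          Nat.mul_le_mul_left _ hnusum
        rw [Nat.mul_add] at hmul
        linarith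

end Part4

end CH

/-- Chvátal–Hanson theorem, weak form: a finite simple graph whose matching number is at
most `ν` and whose maximum degree is at most `Δ` has at most `Δν + ν` edges. -/
theorem chvatal_hanson_weak {V : Type*} [Fintype V] [DecidableEq V]
    (G : SimpleGraph V) [DecidableRel G.Adj] (ν Δ : ℕ) (hν : 1 ≤ ν) (hΔ : 1 ≤ Δ)
    (hmatch : ∀ M : G.Subgraph, M.IsMatching → M.edgeSet.ncard ≤ ν)
    (hdeg : ∀ v, G.degree v ≤ Δ) :
    G.edgeFinset.card ≤ Δ * ν + ν := by
  classical
  have hdeg' : ∀ v, (G.neighborSet v).ncard ≤ Δ := by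
    intro v
    have h1 : (G.neighborSet v).ncard = G.degree v := by
      rw [Set.ncard_eq_toFinset_card']; rfl
    rw [h1]; exact hdeg v
  have hmain := CH.main_bound (Nat.card V) V le_rfl G Δ hdeg'
  have hnuν : CH.nu G ≤ ν := by
    obtain ⟨F, hF, hc⟩ := CH.exists_nu G
    let M : G.Subgraph :=
      { verts := {v | CH.cov F v}
        Adj := fun a b => s(a, b) ∈ F
        adj_sub := fun hab => (G.mem_edgeSet).mp (hF.1 _ hab)
        edge_vert := fun hab => ⟨_, hab, Sym2.mem_mk_left _ _⟩
        symm := ⟨fun a b hab => by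
          show s(b, a) ∈ F
          rw [Sym2.eq_swap]
          exact hab⟩ }
    have hM : M.IsMatching := by
      rintro v ⟨e, he, hv⟩
      obtain ⟨w, rfl⟩ := Sym2.mem_iff_exists.mp hv
      refine ⟨w, he, ?_⟩
      intro y hy
      have heq := hF.2 _ hy _ he v (Sym2.mem_mk_left v y) (Sym2.mem_mk_left v w)
      rcases Sym2.eq_iff.mp heq with ⟨-, h⟩ | ⟨h1, h2⟩
      · exact h
      · exact h2.trans h1
    have hedge : M.edgeSet = ↑F := by
      ext e
      induction e using Sym2.ind with
      | _ a b => exact ⟨fun h => h, fun h => h⟩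
    have hle := hmatch M hM
    rw [hedge, Set.ncard_coe_finset] at hle
    omega
  have heeq : G.edgeFinset.card = G.edgeSet.ncard := by
    rw [Set.ncard_eq_toFinset_card', SimpleGraph.edgeFinset]
  have hmul : Δ * CH.nu G ≤ Δ * ν := Nat.mul_le_mul_left _ hnuν
  rw [heeq]
  calc G.edgeSet.ncard ≤ Δ * CH.nu G + CH.nu G := hmain
    _ ≤ Δ * ν + ν := Nat.add_le_add hmul hnuν
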